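/- The function F_c is monotonically decreasing on (0, μ_s), and the supremum of F_c over μ_d ∈ (0, μ_s) equals the limit of F_c(μ_d) as μ_d → 0⁺, which equals (1−s)·α/(1+ε) + p₀/2. -/

import Mathlib

/-- The function `F_c(μ_d)` appearing in Lemma 4 of the paper:
`f_c` evaluated at the worst-case true intensities, with `α̃ = α/(1+ε)`. -/
noncomputable def Fc (α s p₀ ε μts μs μd : ℝ) : ℝ :=
  (μs ^ 2 * Real.exp μd *
      ((1 - s) * (1 - Real.exp (-(α / (1 + ε)) * μd)) + (p₀ / 2) * (1 - Real.exp (-μd)))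
    - μd ^ 2 * Real.exp μs *
      ((1 - s) * (1 - Real.exp (-α * μts)) + (p₀ / 2) * (1 - Real.exp (-μs))))
  / (μd * μs * (μs - μd))

open Real intervalIntegral in
lemma my_integral_exp_mul (t : ℝ) (ht : t ≠ 0) (b : ℝ) :
    ∫ u in b..1, Real.exp (u * t) = (Real.exp t - Real.exp (b * t)) / t := by
  have h : ∀ u ∈ Set.uIcc b 1, HasDerivAt (fun u => Real.exp (u * t) / t) (Real.exp (u * t)) u := by
    intro u _
    have h2 := (((hasDerivAt_id u).mul_const t).exp).div_const t
    simpa [mul_comm, mul_div_assoc, ht] using h2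
  rw [intervalIntegral.integral_eq_sub_of_hasDerivAt h
    ((Real.continuous_exp.comp (continuous_id.mul continuous_const)).intervalIntegrable _ _)]
  rw [one_mul, div_sub_div_same]

lemma exp_three_point (u x y z : ℝ) (hxy : x ≤ y) (hyz : y ≤ z) :
    Real.exp (u*y) * (z - x) ≤ Real.exp (u*x) * (z - y) + Real.exp (u*z) * (y - x) := by
  rcases eq_or_lt_of_le (hxy.trans hyz) with h | h
  · have hx : x = y := le_antisymm hxy (h ▸ hyz)
    have hz : y = z := le_antisymm hyz (h ▸ hxy).ge
    subst hx hz; ring_nf; rfl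
  · have hzx : 0 < z - x := sub_pos.2 h
    have key := convexOn_exp.2 (Set.mem_univ (u*x)) (Set.mem_univ (u*z))
      (div_nonneg (sub_nonneg.2 hyz) hzx.le) (div_nonneg (sub_nonneg.2 hxy) hzx.le)
      (by field_simp; ring)
    have harg : (z - y)/(z - x) * (u*x) + (y - x)/(z - x) * (u*z) = u*y := by
      field_simp; ring
    rw [smul_eq_mul, smul_eq_mul, smul_eq_mul, smul_eq_mul, harg] at key
    have := mul_le_mul_of_nonneg_right key hzx.le
    calc Real.exp (u*y) * (z-x) ≤ ((z-y)/(z-x) * Real.exp (u*x) + (y-x)/(z-x) * Real.exp (u*z)) * (z-x) := this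
      _ = Real.exp (u*x) * (z - y) + Real.exp (u*z) * (y - x) := by field_simp

lemma h_three_point (b x y z : ℝ) (hb : b ≤ 1) (hx : 0 < x) (hxy : x < y) (hyz : y < z) :
    x*z*(z - x)*(Real.exp y - Real.exp (b*y)) ≤
      y*z*(z - y)*(Real.exp x - Real.exp (b*x)) + x*y*(y - x)*(Real.exp z - Real.exp (b*z)) := by
  have hy : 0 < y := hx.trans hxy
  have hz : 0 < z := hy.trans hyz
  have hint : ∀ t : ℝ, 0 < t → ∫ u in b..1, Real.exp (u * t) = (Real.exp t - Real.exp (b * t)) / t :=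
    fun t ht => my_integral_exp_mul t ht.ne' b
  have hdiv : (Real.exp y - Real.exp (b*y))/y * (z - x) ≤
      (Real.exp x - Real.exp (b*x))/x * (z - y) + (Real.exp z - Real.exp (b*z))/z * (y - x) := by
    rw [← hint x hx, ← hint y hy, ← hint z hz, ← intervalIntegral.integral_mul_const,
      ← intervalIntegral.integral_mul_const, ← intervalIntegral.integral_mul_const,
      ← intervalIntegral.integral_add]
    · apply intervalIntegral.integral_mono_on hb
      · exact ((Real.continuous_exp.comp (continuous_id.mul continuous_const)).mul
          continuous_const).intervalIntegrable _ _
      · exact (((Real.continuous_exp.comp (continuous_id.mul continuous_const)).mul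
          continuous_const).add ((Real.continuous_exp.comp (continuous_id.mul
          continuous_const)).mul continuous_const)).intervalIntegrable _ _
      · intro u _
        exact exp_three_point u x y z hxy.le hyz.le
    · exact ((Real.continuous_exp.comp (continuous_id.mul continuous_const)).mul
        continuous_const).intervalIntegrable _ _
    · exact ((Real.continuous_exp.comp (continuous_id.mul continuous_const)).mul
        continuous_const).intervalIntegrable _ _
  have hmul := mul_le_mul_of_nonneg_right hdiv (by positivity : (0:ℝ) ≤ x*y*z)
  calc x*z*(z - x)*(Real.exp y - Real.exp (b*y))
      = (Real.exp y - Real.exp (b*y))/y * (z - x) * (x*y*z) := by field_simp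
    _ ≤ ((Real.exp x - Real.exp (b*x))/x * (z - y) + (Real.exp z - Real.exp (b*z))/z * (y - x)) * (x*y*z) := hmul
    _ = y*z*(z - y)*(Real.exp x - Real.exp (b*x)) + x*y*(y - x)*(Real.exp z - Real.exp (b*z)) := by
        field_simp

lemma key_ineq (c₁ c₂ b x y z : ℝ) (hc₁ : 0 ≤ c₁) (hc₂ : 0 ≤ c₂) (hb : b ≤ 1)
    (hx : 0 < x) (hxy : x < y) (hyz : y < z) :
    x*z*(z - x)*(c₁*(Real.exp y - Real.exp (b*y)) + c₂*(Real.exp y - 1)) ≤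
      y*z*(z - y)*(c₁*(Real.exp x - Real.exp (b*x)) + c₂*(Real.exp x - 1))
      + x*y*(y - x)*(c₁*(Real.exp z - Real.exp (b*z)) + c₂*(Real.exp z - 1)) := by
  have h1 := h_three_point b x y z hb hx hxy hyz
  have h2 := h_three_point 0 x y z zero_le_one hx hxy hyz
  simp only [zero_mul, Real.exp_zero] at h2
  nlinarith [mul_le_mul_of_nonneg_left h1 hc₁, mul_le_mul_of_nonneg_left h2 hc₂]

theorem stmt18 (α s p₀ ε μts μs : ℝ)
    (hα : 0 < α) (hα1 : α ≤ 1) (hs0 : 0 ≤ s) (hs : s < 1 / 2) (hp : 0 < p₀)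
    (hε : 0 < ε) (hμts : 0 < μts) (hμs : 0 < μs) (hμs' : μs ≤ (1 + ε) * μts) :
    AntitoneOn (fun μd => Fc α s p₀ ε μts μs μd) (Set.Ioo 0 μs) ∧
    sSup ((fun μd => Fc α s p₀ ε μts μs μd) '' Set.Ioo 0 μs) = (1 - s) * α / (1 + ε) + p₀ / 2 ∧
    Filter.Tendsto (fun μd => Fc α s p₀ ε μts μs μd)
      (nhdsWithin 0 (Set.Ioo 0 μs)) (nhds ((1 - s) * α / (1 + ε) + p₀ / 2)) := by
  have h1ε : (0:ℝ) < 1 + ε := by linarith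
  set b : ℝ := 1 - α / (1 + ε) with hb_def
  have hb0 : 0 ≤ b := by
    have : α / (1 + ε) ≤ 1 := by
      rw [div_le_one h1ε]; linarith
    simp [hb_def]; linarith
  have hb1 : b ≤ 1 := by
    have : 0 < α / (1 + ε) := div_pos hα h1ε
    simp [hb_def]; linarith
  set c₁ : ℝ := 1 - s with hc1_def
  set c₂ : ℝ := p₀ / 2 with hc2_def
  have hc₁ : 0 < c₁ := by simp [hc1_def]; linarith
  have hc₂ : 0 < c₂ := by positivity
  set A : ℝ → ℝ := fun t => c₁*(Real.exp t - Real.exp (b*t)) + c₂*(Real.exp t - 1) with hA_def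
  set B : ℝ := c₁*(Real.exp μs - Real.exp (μs - α*μts)) + c₂*(Real.exp μs - 1) with hB_def
  -- rewriting Fc
  have hFc : ∀ x : ℝ, Fc α s p₀ ε μts μs x = (μs^2 * A x - x^2 * B)/(x*μs*(μs - x)) := by
    intro x
    have e1 : Real.exp (-(α / (1 + ε)) * x) = Real.exp (b*x) / Real.exp x := by
      rw [eq_div_iff (Real.exp_ne_zero x), ← Real.exp_add]; congr 1; rw [hb_def]; ring
    have e2 : Real.exp (-x) = 1 / Real.exp x := by
      rw [eq_div_iff (Real.exp_ne_zero x), ← Real.exp_add]; simp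
    have e3 : Real.exp (-α * μts) = Real.exp (μs - α*μts) / Real.exp μs := by
      rw [eq_div_iff (Real.exp_ne_zero μs), ← Real.exp_add]; congr 1; ring
    have e4 : Real.exp (-μs) = 1 / Real.exp μs := by
      rw [eq_div_iff (Real.exp_ne_zero μs), ← Real.exp_add]; simp
    rw [Fc, e1, e2, e3, e4, hA_def, hB_def]
    have h5 := Real.exp_ne_zero x
    have h6 := Real.exp_ne_zero μs
    congr 1
    field_simp
    ring
  have hBA : A μs ≤ B := by
    have harg : μs - α*μts ≤ b*μs := by
      have : μs / (1 + ε) ≤ μts := by rw [div_le_iff₀ h1ε]; linarith [hμs']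
      have h2 : α * (μs/(1+ε)) ≤ α * μts := by
        exact mul_le_mul_of_nonneg_left this hα.le
      have h3 : (α/(1+ε))*μs = α*(μs/(1+ε)) := by ring
      rw [hb_def]; nlinarith [h2, h3]
    have := Real.exp_le_exp.2 harg
    simp only [hA_def, hB_def]
    nlinarith [this, hc₁]
  -- antitone
  have hanti : AntitoneOn (fun μd => Fc α s p₀ ε μts μs μd) (Set.Ioo 0 μs) := by
    intro x hx y hy hxy
    rcases eq_or_lt_of_le hxy with rfl | hlt
    · exact le_refl _
    simp only [hFc]
    rw [div_le_div_iff₀ (mul_pos (mul_pos hy.1 hμs) (sub_pos.2 hy.2))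
      (mul_pos (mul_pos hx.1 hμs) (sub_pos.2 hx.2))]
    have hkey : x*μs*(μs - x)*A y ≤ y*μs*(μs - y)*A x + x*y*(y - x)*A μs :=
      key_ineq c₁ c₂ b x y μs hc₁.le hc₂.le hb1 hx.1 hlt hy.2
    have hkey2 := mul_le_mul_of_nonneg_left hkey (sq_nonneg μs)
    have hprod : 0 ≤ μs^2 * (x * (y * ((y - x) * (B - A μs)))) :=
      mul_nonneg (sq_nonneg μs) (mul_nonneg hx.1.le (mul_nonneg hy.1.le
        (mul_nonneg (sub_nonneg.2 hlt.le) (sub_nonneg.2 hBA))))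
    linarith [hkey2, hprod]
  -- tendsto
  have hL : (1 - s) * α / (1 + ε) + p₀ / 2 = c₁*(1-b) + c₂ := by
    rw [hc1_def, hc2_def, hb_def]; ring
  have htend : Filter.Tendsto (fun μd => Fc α s p₀ ε μts μs μd)
      (nhdsWithin 0 (Set.Ioo 0 μs)) (nhds ((1 - s) * α / (1 + ε) + p₀ / 2)) := by
    have hder : HasDerivAt A (c₁*(1-b) + c₂) 0 := by
      have h1 : HasDerivAt Real.exp 1 (0:ℝ) := by simpa using Real.hasDerivAt_exp 0
      have h2 : HasDerivAt (fun t : ℝ => Real.exp (b*t)) b 0 := by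
        simpa using (((hasDerivAt_id (0:ℝ)).const_mul b).exp)
      have h3 : HasDerivAt (fun t : ℝ => Real.exp t - 1) 1 0 := by
        simpa using h1.sub_const 1
      have h4 : HasDerivAt (fun t => c₁*(Real.exp t - Real.exp (b*t)) + c₂*(Real.exp t - 1)) (c₁*(1-b) + c₂*1) 0 :=
        ((h1.sub h2).const_mul c₁).add (h3.const_mul c₂)
      rw [mul_one] at h4
      exact h4
    have hslope : Filter.Tendsto (fun x => A x / x) (nhdsWithin 0 (Set.Ioo 0 μs))
        (nhds (c₁*(1-b) + c₂)) := by
      have := hasDerivAt_iff_tendsto_slope.mp hder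
      have h2 : Filter.Tendsto (slope A 0) (nhdsWithin 0 (Set.Ioo 0 μs))
          (nhds (c₁*(1-b) + c₂)) :=
        this.mono_left (nhdsWithin_mono 0 (fun t ht => ne_of_gt ht.1))
      apply h2.congr'
      filter_upwards [self_mem_nhdsWithin] with t ht
      rw [slope_def_field]
      simp [hA_def, div_eq_iff (ne_of_gt ht.1)]
    have hfrac1 : Filter.Tendsto (fun x : ℝ => μs/(μs - x)) (nhdsWithin 0 (Set.Ioo 0 μs))
        (nhds 1) := by
      have : ContinuousAt (fun x : ℝ => μs/(μs - x)) 0 := by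
        apply ContinuousAt.div continuousAt_const (by fun_prop)
        simp [hμs.ne']
      have h2 := this.tendsto.mono_left (nhdsWithin_le_nhds (s := Set.Ioo 0 μs))
      simpa [hμs.ne'] using h2
    have hfrac2 : Filter.Tendsto (fun x : ℝ => x/(μs - x)) (nhdsWithin 0 (Set.Ioo 0 μs))
        (nhds 0) := by
      have : ContinuousAt (fun x : ℝ => x/(μs - x)) 0 := by
        apply ContinuousAt.div (by fun_prop) (by fun_prop)
        simp [hμs.ne']
      have h2 := this.tendsto.mono_left (nhdsWithin_le_nhds (s := Set.Ioo 0 μs))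
      simpa using h2
    have hcomb := (hfrac1.mul hslope).sub ((tendsto_const_nhds (x := B/μs)).mul hfrac2)
    have hval : 1*(c₁*(1-b)+c₂) - B/μs*0 = c₁*(1-b)+c₂ := by ring
    rw [hval] at hcomb
    rw [hL]
    apply hcomb.congr'
    filter_upwards [self_mem_nhdsWithin] with t ht
    rw [hFc t]
    have h1 : t ≠ 0 := ne_of_gt ht.1
    have h2 : μs - t ≠ 0 := ne_of_gt (sub_pos.2 ht.2)
    field_simp
  have hneBot : (nhdsWithin (0:ℝ) (Set.Ioo 0 μs)).NeBot := by
    rw [← mem_closure_iff_nhdsWithin_neBot, closure_Ioo hμs.ne]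
    exact ⟨le_refl 0, hμs.le⟩
  have hub : ∀ x ∈ Set.Ioo 0 μs, Fc α s p₀ ε μts μs x ≤ (1 - s) * α / (1 + ε) + p₀ / 2 := by
    intro x hx
    apply ge_of_tendsto htend
    have hev : ∀ᶠ y in nhdsWithin (0:ℝ) (Set.Ioo 0 μs), y < x :=
      eventually_nhdsWithin_of_eventually_nhds (eventually_lt_nhds hx.1)
    filter_upwards [self_mem_nhdsWithin, hev] with y hy hylt
    exact hanti hy hx hylt.le
  have hlub : IsLUB ((fun μd => Fc α s p₀ ε μts μs μd) '' Set.Ioo 0 μs)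
      ((1 - s) * α / (1 + ε) + p₀ / 2) := by
    constructor
    · rintro v ⟨x, hx, rfl⟩
      exact hub x hx
    · intro c hc
      apply le_of_tendsto htend
      filter_upwards [self_mem_nhdsWithin] with y hy
      exact hc ⟨y, hy, rfl⟩
  refine ⟨hanti, hlub.csSup_eq ⟨_, ⟨μs/2, ⟨by positivity, by linarith⟩, rfl⟩⟩, htend⟩
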